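/- (Second-layer invertibility.) Let g ∈ L¹(ℝ²) with Fourier transform 𝓕g(ω) = G(‖ω‖), where G : [0,∞) → [0,∞) is antitone. Let Ξ ⊂ ℝ² be a finite set of central frequencies, J ∈ ℕ, and define ψ_{j,ζ}(u) = 2^{−2j} g(2^{−j}u) sin(⟨ζ, 2^{−j}u⟩) for 0 ≤ j < J, ζ ∈ Ξ. Let φ, h ∈ L¹(ℝ²) and assume for every ω ∈ ℝ²: |𝓕φ(ω)|² + |𝓕h(ω)|² + Σ_{j<J, ζ∈Ξ} |𝓕ψ_{j,ζ}(ω)|² > 0. For x ∈ L¹(ℝ²), γ ∈ {−1,+1}, and ζ ∈ Ξ, set v^{x}_{γ,ζ} = Σ_{j<J} σ(γ · x ∗ ψ_{j,ζ}) ∈ L¹(ℝ²), and define the second-layer outputs as the collection U²x = { v^{x}_{γ,ζ} ∗ φ, v^{x}_{γ,ζ} ∗ h, σ(γ' · v^{x}_{γ,ζ} ∗ ψ_{j',ζ'}) : γ, γ' ∈ {±1}, ζ, ζ' ∈ Ξ, 0 ≤ j' < J }. If x, y ∈ L¹(ℝ²) satisfy x ∗ φ = y ∗ φ, x ∗ h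 = y ∗ h almost everywhere, and every corresponding element of U²x and U²y agrees almost everywhere, then x = y almost everywhere. That is, the map x ↦ { x ∗ φ, x ∗ h, U²x } is invertible. -/

import Mathlib

open MeasureTheory
open scoped RealInnerProductSpace

/-- The Fourier transform on `ℝ²` with convention `𝓕f(ω) = ∫ f(u) e^{−i⟨u,ω⟩} du`. -/
noncomputable def fourier2 (f : EuclideanSpace ℝ (Fin 2) → ℝ)
    (ω : EuclideanSpace ℝ (Fin 2)) : ℂ :=
  ∫ u : EuclideanSpace ℝ (Fin 2), (f u : ℂ) * Complex.exp (-Complex.I * (⟪u, ω⟫ : ℂ))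

/-- Convolution on `ℝ²`: `(f ∗ g)(u) = ∫ f(u−t) g(t) dt`. -/
noncomputable def conv2 (f g : EuclideanSpace ℝ (Fin 2) → ℝ)
    (u : EuclideanSpace ℝ (Fin 2)) : ℝ :=
  ∫ t : EuclideanSpace ℝ (Fin 2), f (u - t) * g t

section Helpers

open scoped FourierTransform Convolution

local notation "V2" => EuclideanSpace ℝ (Fin 2)

lemma fourier2_congr {f f' : V2 → ℝ} (h : f =ᵐ[volume] f') (ω : V2) :
    fourier2 f ω = fourier2 f' ω :=
  integral_congr_ae (h.mono fun u hu => by simp only [hu])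

lemma expfac_cont (ω : V2) :
    Continuous fun u : V2 => Complex.exp (-Complex.I * (⟪u, ω⟫ : ℝ)) := by
  refine Complex.continuous_exp.comp ?_
  exact continuous_const.mul (Complex.continuous_ofReal.comp
    (continuous_id.inner continuous_const))

lemma expfac_norm (ω : V2) (u : V2) :
    ‖Complex.exp (-Complex.I * (⟪u, ω⟫ : ℝ))‖ = 1 := by
  rw [Complex.norm_exp]
  simp

lemma integrable_kernel {f : V2 → ℝ} (hf : Integrable f) (ω : V2) :
    Integrable fun u => (f u : ℂ) * Complex.exp (-Complex.I * (⟪u, ω⟫ : ℝ)) := by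
  have h := (hf.ofReal (𝕜 := ℂ)).bdd_mul (expfac_cont ω).aestronglyMeasurable
      (c := 1) (Filter.Eventually.of_forall fun u => le_of_eq (expfac_norm ω u))
  simpa [mul_comm] using h

lemma conv2_eq_convolution (f g : V2 → ℝ) :
    conv2 f g = (g ⋆[ContinuousLinearMap.mul ℝ ℝ, volume] f) := by
  funext u
  simp only [conv2, convolution, ContinuousLinearMap.mul_apply']
  apply integral_congr_ae
  filter_upwards with t
  ring

lemma conv2_integrable {f g : V2 → ℝ} (hf : Integrable f) (hg : Integrable g) :
    Integrable (conv2 f g) := by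
  rw [conv2_eq_convolution]
  exact hg.integrable_convolution _ hf

lemma fourier2_conv {f g : V2 → ℝ} (hf : Integrable f) (hg : Integrable g) (ω : V2) :
    fourier2 (conv2 f g) ω = fourier2 f ω * fourier2 g ω := by
  have hE : Continuous fun u : V2 => Complex.exp (-Complex.I * (⟪u, ω⟫ : ℝ)) :=
    expfac_cont ω
  set E : V2 → ℂ := fun u => Complex.exp (-Complex.I * (⟪u, ω⟫ : ℝ)) with hEdef
  have step1 : fourier2 (conv2 f g) ω
      = ∫ u : V2, ∫ t : V2, ((g t * f (u - t) : ℝ) : ℂ) * E u := by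
    unfold fourier2 conv2
    congr 1; funext u
    rw [show (∫ t : V2, f (u - t) * g t) = ∫ t : V2, g t * f (u - t) by
      apply integral_congr_ae; filter_upwards with t; ring]
    symm
    rw [integral_mul_const]
    congr 1
    exact integral_ofReal
  have hmeas : AEStronglyMeasurable
      (fun p : V2 × V2 => ((g p.2 * f (p.1 - p.2) : ℝ) : ℂ) * E p.1)
      (volume.prod volume) := by
    have h1 : AEStronglyMeasurable (fun p : V2 × V2 => g p.2 * f (p.1 - p.2))
        (volume.prod volume) :=
      hg.aestronglyMeasurable.convolution_integrand (ContinuousLinearMap.mul ℝ ℝ)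
        hf.aestronglyMeasurable
    exact (Complex.continuous_ofReal.comp_aestronglyMeasurable h1).mul
      ((hE.comp continuous_fst).aestronglyMeasurable)
  have hint : Integrable
      (fun p : V2 × V2 => ((g p.2 * f (p.1 - p.2) : ℝ) : ℂ) * E p.1)
      (volume.prod volume) := by
    have hR : Integrable (fun p : V2 × V2 => g p.2 * f (p.1 - p.2)) (volume.prod volume) :=
      hg.convolution_integrand (ContinuousLinearMap.mul ℝ ℝ) hf
    refine hR.norm.mono' hmeas ?_
    filter_upwards with p
    rw [norm_mul]
    have h2 : ‖E p.1‖ = 1 := expfac_norm ω p.1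
    rw [h2, mul_one, Complex.norm_real]
  have inner_eval : ∀ t : V2, (∫ u : V2, ((g t * f (u - t) : ℝ) : ℂ) * E u)
      = ((g t : ℂ) * E t) * fourier2 f ω := by
    intro t
    rw [← integral_add_right_eq_self (fun u : V2 => ((g t * f (u - t) : ℝ) : ℂ) * E u) t]
    simp only [add_sub_cancel_right]
    have key : ∀ w : V2, ((g t * f w : ℝ) : ℂ) * E (w + t)
        = ((g t : ℂ) * E t) * ((f w : ℂ) * E w) := by
      intro w
      have hadd : E (w + t) = E w * E t := by
        simp only [hEdef]
        rw [← Complex.exp_add]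
        congr 1
        rw [inner_add_left]
        push_cast
        ring
      rw [hadd]; push_cast; ring
    simp only [key]
    rw [integral_const_mul]
    rfl
  rw [step1, integral_integral_swap hint]
  simp only [inner_eval]
  rw [integral_mul_const]
  rw [mul_comm]
  rfl

lemma fourier2_sub {f g : V2 → ℝ} (hf : Integrable f) (hg : Integrable g) (ω : V2) :
    fourier2 (fun u => f u - g u) ω = fourier2 f ω - fourier2 g ω := by
  unfold fourier2
  rw [← integral_sub (integrable_kernel hf ω) (integrable_kernel hg ω)]
  apply integral_congr_ae
  filter_upwards with u
  push_cast
  ring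

lemma fourier2_sum {ι : Type*} (s : Finset ι) (F : ι → V2 → ℝ)
    (hF : ∀ i ∈ s, Integrable (F i)) (ω : V2) :
    fourier2 (fun u => ∑ i ∈ s, F i u) ω = ∑ i ∈ s, fourier2 (F i) ω := by
  unfold fourier2
  rw [← integral_finset_sum s (fun i hi => integrable_kernel (hF i hi) ω)]
  apply integral_congr_ae
  filter_upwards with u
  push_cast
  rw [Finset.sum_mul]

noncomputable def schwartzOfCompact (g : V2 → ℝ)
    (hg : ContDiff ℝ ((⊤ : ℕ∞) : WithTop ℕ∞) g) (hs : HasCompactSupport g) :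
    SchwartzMap (EuclideanSpace ℝ (Fin 2)) ℂ where
  toFun := fun u => (g u : ℂ)
  smooth' := Complex.ofRealCLM.contDiff.comp hg
  decay' := by
    intro k n
    have hgc : ContDiff ℝ ((⊤ : ℕ∞) : WithTop ℕ∞) (fun u : V2 => (g u : ℂ)) :=
      Complex.ofRealCLM.contDiff.comp hg
    have hsc : HasCompactSupport (fun u : V2 => (g u : ℂ)) :=
      hs.comp_left (g := Complex.ofReal) Complex.ofReal_zero
    have h1 : HasCompactSupport (iteratedFDeriv ℝ n (fun u : V2 => (g u : ℂ))) :=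
      hsc.iteratedFDeriv n
    have hcont : Continuous
        (fun x : V2 => ‖x‖ ^ k * ‖iteratedFDeriv ℝ n (fun u : V2 => (g u : ℂ)) x‖) :=
      (continuous_norm.pow k).mul
        ((hgc.continuous_iteratedFDeriv (by exact_mod_cast le_top)).norm)
    have h2 : HasCompactSupport
        (fun x : V2 => ‖x‖ ^ k * ‖iteratedFDeriv ℝ n (fun u : V2 => (g u : ℂ)) x‖) :=
      (h1.norm).mul_left
    rcases h2.exists_bound_of_continuous hcont with ⟨C, hC⟩
    exact ⟨C, fun x => le_trans (le_abs_self _) (hC x)⟩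

lemma fourier2_zero_ae {f : V2 → ℝ} (hf : Integrable f)
    (h0 : ∀ ω : V2, fourier2 f ω = 0) : ∀ᵐ u : V2, f u = 0 := by
  set F : V2 → ℂ := fun u => (f u : ℂ) with hFdef
  have hF : Integrable F := hf.ofReal
  have hFT : ∀ ξ : V2, 𝓕 F ξ = 0 := by
    intro ξ
    have h1 : 𝓕 F ξ = fourier2 f ((2 * Real.pi) • ξ) := by
      rw [Real.fourier_eq]
      unfold fourier2
      apply integral_congr_ae
      filter_upwards with u
      rw [Circle.smul_def, Real.fourierChar_apply, real_inner_smul_right, smul_eq_mul,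
        hFdef]
      push_cast
      ring_nf
    rw [h1, h0]
  have key : ∀ (gt : V2 → ℝ), ContDiff ℝ ((⊤ : ℕ∞) : WithTop ℕ∞) gt →
      HasCompactSupport gt → ∫ u : V2, gt u • F u = 0 := by
    intro gt hsm hsupp
    set S := schwartzOfCompact gt hsm hsupp with hSdef
    set w := (FourierTransform.fourierCLE ℂ (SchwartzMap V2 ℂ)).symm S with hwdef
    have hw : 𝓕 (⇑w) = ⇑S := by
      have h2 := (FourierTransform.fourierCLE ℂ (SchwartzMap V2 ℂ)).apply_symm_apply S
      rw [← h2, FourierTransform.fourierCLE_apply]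
      rfl
    have mult := VectorFourier.integral_bilin_fourierIntegral_eq_flip
      (L := innerₗ (EuclideanSpace ℝ (Fin 2))) (μ := volume) (ν := volume)
      (ContinuousLinearMap.mul ℂ ℂ) Real.continuous_fourierChar
      (by exact continuous_inner) w.integrable hF
    have hflip : (∫ u : V2, w u * VectorFourier.fourierIntegral Real.fourierChar volume
        (innerₗ (EuclideanSpace ℝ (Fin 2))).flip F u) = 0 := by
      have : ∀ u : V2, VectorFourier.fourierIntegral Real.fourierChar volume
          (innerₗ (EuclideanSpace ℝ (Fin 2))).flip F u = 𝓕 F u := by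
        intro u
        rw [Real.fourier_eq]
        unfold VectorFourier.fourierIntegral
        apply integral_congr_ae
        filter_upwards with t
        congr 2
        simp only [LinearMap.flip_apply, innerₗ]
        exact congrArg Neg.neg (real_inner_comm t u)
      simp only [this, hFT, mul_zero, integral_zero]
    have hmain : (∫ ξ : V2, 𝓕 (⇑w) ξ * F ξ) = 0 := by
      rw [show (∫ ξ : V2, 𝓕 (⇑w) ξ * F ξ) = ∫ u : V2, w u *
          VectorFourier.fourierIntegral Real.fourierChar volume
          (innerₗ (EuclideanSpace ℝ (Fin 2))).flip F u from mult, hflip]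
    rw [hw] at hmain
    calc (∫ u : V2, gt u • F u) = ∫ u : V2, (S : V2 → ℂ) u * F u := by
          apply integral_congr_ae
          filter_upwards with u
          rw [Complex.real_smul]
          rfl
      _ = 0 := hmain
  have hF0 : ∀ᵐ u : V2, F u = 0 := by
    apply ae_eq_zero_of_integral_contDiff_smul_eq_zero hF.locallyIntegrable
    intro gt h1 h2
    exact key gt h1 h2
  filter_upwards [hF0] with u hu
  have h3 : (f u : ℂ) = 0 := hu
  exact_mod_cast h3

lemma psi_integrable {g : V2 → ℝ} (hg : Integrable g) (j : ℕ) (ζ : V2) :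
    Integrable (fun u : V2 => ((2:ℝ) ^ (2 * j))⁻¹ * g (((2:ℝ) ^ j)⁻¹ • u)
      * Real.sin ⟪ζ, ((2:ℝ) ^ j)⁻¹ • u⟫) := by
  have hr : ((2:ℝ) ^ j)⁻¹ ≠ 0 := by positivity
  have h1 : Integrable (fun u : V2 => g (((2:ℝ) ^ j)⁻¹ • u)) := hg.comp_smul hr
  have h2 : Integrable (fun u : V2 => ((2:ℝ) ^ (2 * j))⁻¹ * g (((2:ℝ) ^ j)⁻¹ • u)) :=
    h1.const_mul _
  have h3 : Continuous (fun u : V2 => Real.sin ⟪ζ, ((2:ℝ) ^ j)⁻¹ • u⟫) :=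
    Real.continuous_sin.comp (continuous_const.inner (continuous_const_smul _))
  have h4 := h2.bdd_mul h3.aestronglyMeasurable (c := 1)
      (Filter.Eventually.of_forall fun u => by
        rw [Real.norm_eq_abs]
        exact abs_le.2 ⟨Real.neg_one_le_sin _, Real.sin_le_one _⟩)
  simpa [mul_comm, mul_assoc] using h4

lemma fourier2_psi {G : ℝ → ℝ} {g : V2 → ℝ} (hg : Integrable g)
    (hFg : ∀ ω : V2, fourier2 g ω = (G ‖ω‖ : ℂ)) (j : ℕ) (ζ ω : V2) :
    fourier2 (fun u : V2 => ((2:ℝ) ^ (2 * j))⁻¹ * g (((2:ℝ) ^ j)⁻¹ • u)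
        * Real.sin ⟪ζ, ((2:ℝ) ^ j)⁻¹ • u⟫) ω
      = ((G ‖((2:ℝ) ^ j) • ω - ζ‖ - G ‖((2:ℝ) ^ j) • ω + ζ‖ : ℝ) : ℂ)
          / (2 * Complex.I) := by
  have hr : (0:ℝ) < (2:ℝ) ^ j := by positivity
  set r : ℝ := (2:ℝ) ^ j with hrdef
  set ξ : V2 := r • ω with hξ
  set W : V2 → ℂ := fun t => (g t : ℂ) * (Real.sin ⟪ζ, t⟫ : ℝ)
      * Complex.exp (-Complex.I * (⟪t, ξ⟫ : ℝ)) with hW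
  have hinner : ∀ u : V2, ⟪r⁻¹ • u, ξ⟫ = ⟪u, ω⟫ := by
    intro u
    rw [hξ, real_inner_smul_left, real_inner_smul_right, ← mul_assoc,
      inv_mul_cancel₀ hr.ne', one_mul]
  have hpow : ((2:ℝ) ^ (2 * j)) = r ^ 2 := by
    rw [hrdef, mul_comm 2 j, pow_mul]
  have stepA : fourier2 (fun u : V2 => ((2:ℝ) ^ (2 * j))⁻¹ * g (((2:ℝ) ^ j)⁻¹ • u)
      * Real.sin ⟪ζ, ((2:ℝ) ^ j)⁻¹ • u⟫) ω = ∫ t : V2, W t := by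
    unfold fourier2
    calc (∫ u : V2, (((2:ℝ) ^ (2 * j))⁻¹ * g (((2:ℝ) ^ j)⁻¹ • u)
            * Real.sin ⟪ζ, ((2:ℝ) ^ j)⁻¹ • u⟫ : ℝ) * Complex.exp (-Complex.I * (⟪u, ω⟫ : ℝ)))
        = ∫ u : V2, ((r ^ 2)⁻¹ : ℝ) • W (r⁻¹ • u) := by
          apply integral_congr_ae
          filter_upwards with u
          rw [hW]
          simp only
          rw [hinner u, hpow, Complex.real_smul]
          push_cast
          ring
      _ = ((r ^ 2)⁻¹ : ℝ) • ∫ u : V2, W (r⁻¹ • u) := integral_smul _ _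
      _ = ((r ^ 2)⁻¹ : ℝ) • (|r ^ (Module.finrank ℝ (EuclideanSpace ℝ (Fin 2)))|
            • ∫ t : V2, W t) := by rw [Measure.integral_comp_inv_smul]
      _ = ∫ t : V2, W t := by
          rw [finrank_euclideanSpace_fin, abs_of_pos (by positivity), smul_smul,
            inv_mul_cancel₀ (by positivity), one_smul]
  have point : ∀ t : V2, W t
      = ((g t : ℂ) * Complex.exp (-Complex.I * (⟪t, ξ - ζ⟫ : ℝ))
          - (g t : ℂ) * Complex.exp (-Complex.I * (⟪t, ξ + ζ⟫ : ℝ))) / (2 * Complex.I) := by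
    intro t
    have e1 : ⟪t, ξ - ζ⟫ = ⟪t, ξ⟫ - ⟪ζ, t⟫ := by
      rw [inner_sub_right, real_inner_comm ζ t]
    have e2 : ⟪t, ξ + ζ⟫ = ⟪t, ξ⟫ + ⟪ζ, t⟫ := by
      rw [inner_add_right, real_inner_comm ζ t]
    rw [hW]
    simp only
    rw [e1, e2, Complex.ofReal_sub, Complex.ofReal_add, Complex.ofReal_sin, Complex.sin]
    set a : ℂ := ((⟪t, ξ⟫ : ℝ) : ℂ)
    set b : ℂ := ((⟪ζ, t⟫ : ℝ) : ℂ)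
    have h1 : Complex.exp (-Complex.I * (a - b))
        = Complex.exp (-Complex.I * a) * Complex.exp (b * Complex.I) := by
      rw [← Complex.exp_add]; congr 1; ring
    have h2 : Complex.exp (-Complex.I * (a + b))
        = Complex.exp (-Complex.I * a) * Complex.exp (-b * Complex.I) := by
      rw [← Complex.exp_add]; congr 1; ring
    rw [h1, h2]
    have hI : Complex.I * Complex.I = -1 := Complex.I_mul_I
    rw [eq_div_iff (mul_ne_zero two_ne_zero Complex.I_ne_zero)]
    linear_combination (↑(g t) * (Complex.exp (-b * Complex.I) - Complex.exp (b * Complex.I))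
      * Complex.exp (-Complex.I * a)) * hI
  have hint1 := integrable_kernel hg (ξ - ζ)
  have hint2 := integrable_kernel hg (ξ + ζ)
  rw [stepA]
  calc (∫ t : V2, W t)
      = ∫ t : V2, ((g t : ℂ) * Complex.exp (-Complex.I * (⟪t, ξ - ζ⟫ : ℝ))
          - (g t : ℂ) * Complex.exp (-Complex.I * (⟪t, ξ + ζ⟫ : ℝ))) / (2 * Complex.I) :=
        integral_congr_ae (Filter.Eventually.of_forall point)
    _ = (∫ t : V2, ((g t : ℂ) * Complex.exp (-Complex.I * (⟪t, ξ - ζ⟫ : ℝ))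
          - (g t : ℂ) * Complex.exp (-Complex.I * (⟪t, ξ + ζ⟫ : ℝ)))) / (2 * Complex.I) :=
        integral_div _ _
    _ = (fourier2 g (ξ - ζ) - fourier2 g (ξ + ζ)) / (2 * Complex.I) := by
        rw [integral_sub hint1 hint2]; rfl
    _ = _ := by
        rw [hFg, hFg]
        push_cast
        ring

lemma relu_sub (s : ℝ) : max 0 (1 * s) - max 0 ((-1) * s) = s := by
  rcases le_total 0 s with h | h
  · rw [one_mul, neg_one_mul, max_eq_right h, max_eq_left (neg_nonpos.2 h)]
    ring
  · rw [one_mul, neg_one_mul, max_eq_left h, max_eq_right (neg_nonneg.2 h)]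
    ring

lemma norm_sub_le_norm_add' {u w : V2} (h : 0 ≤ ⟪u, w⟫) : ‖u - w‖ ≤ ‖u + w‖ := by
  have h1 : ‖u - w‖ ^ 2 ≤ ‖u + w‖ ^ 2 := by
    rw [norm_sub_sq_real, norm_add_sq_real]
    linarith
  calc ‖u - w‖ = Real.sqrt (‖u - w‖ ^ 2) := (Real.sqrt_sq (norm_nonneg _)).symm
    _ ≤ Real.sqrt (‖u + w‖ ^ 2) := Real.sqrt_le_sqrt h1
    _ = ‖u + w‖ := Real.sqrt_sq (norm_nonneg _)

end Helpers

section Main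

local notation "V2" => EuclideanSpace ℝ (Fin 2)

theorem second_layer_invertible
    (G : ℝ → ℝ) (hmono : AntitoneOn G (Set.Ici 0))
    (hGnonneg : ∀ t ∈ Set.Ici (0 : ℝ), 0 ≤ G t)
    (g : EuclideanSpace ℝ (Fin 2) → ℝ) (hg : Integrable g)
    (hFg : ∀ ω : EuclideanSpace ℝ (Fin 2), fourier2 g ω = (G ‖ω‖ : ℂ))
    (Ξ : Finset (EuclideanSpace ℝ (Fin 2))) (J : ℕ)
    (ψ : ℕ → EuclideanSpace ℝ (Fin 2) → EuclideanSpace ℝ (Fin 2) → ℝ)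
    (hψ : ∀ j ζ u, ψ j ζ u
      = ((2 : ℝ) ^ (2 * j))⁻¹ * g (((2 : ℝ) ^ j)⁻¹ • u)
          * Real.sin ⟪ζ, ((2 : ℝ) ^ j)⁻¹ • u⟫)
    (φ hfil : EuclideanSpace ℝ (Fin 2) → ℝ)
    (hφ : Integrable φ) (hh : Integrable hfil)
    (hframe : ∀ ω : EuclideanSpace ℝ (Fin 2),
      0 < ‖fourier2 φ ω‖ ^ 2 + ‖fourier2 hfil ω‖ ^ 2
            + ∑ j ∈ Finset.range J, ∑ ζ ∈ Ξ, ‖fourier2 (ψ j ζ) ω‖ ^ 2)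
    (x y : EuclideanSpace ℝ (Fin 2) → ℝ)
    (hx : Integrable x) (hy : Integrable y)
    (v : (EuclideanSpace ℝ (Fin 2) → ℝ) → ℝ → EuclideanSpace ℝ (Fin 2)
          → EuclideanSpace ℝ (Fin 2) → ℝ)
    (hv : ∀ z γ ζ u, v z γ ζ u
      = ∑ j ∈ Finset.range J, max 0 (γ * conv2 z (ψ j ζ) u))
    (heqφ : ∀ᵐ u : EuclideanSpace ℝ (Fin 2), conv2 x φ u = conv2 y φ u)
    (heqh : ∀ᵐ u : EuclideanSpace ℝ (Fin 2), conv2 x hfil u = conv2 y hfil u)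
    (h2φ : ∀ γ ∈ ({-1, 1} : Set ℝ), ∀ ζ ∈ Ξ,
      ∀ᵐ u : EuclideanSpace ℝ (Fin 2),
        conv2 (v x γ ζ) φ u = conv2 (v y γ ζ) φ u)
    (h2h : ∀ γ ∈ ({-1, 1} : Set ℝ), ∀ ζ ∈ Ξ,
      ∀ᵐ u : EuclideanSpace ℝ (Fin 2),
        conv2 (v x γ ζ) hfil u = conv2 (v y γ ζ) hfil u)
    (h2ψ : ∀ γ ∈ ({-1, 1} : Set ℝ), ∀ ζ ∈ Ξ,
      ∀ γ' ∈ ({-1, 1} : Set ℝ), ∀ ζ' ∈ Ξ, ∀ j' ∈ Finset.range J,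
        ∀ᵐ u : EuclideanSpace ℝ (Fin 2),
          max 0 (γ' * conv2 (v x γ ζ) (ψ j' ζ') u)
            = max 0 (γ' * conv2 (v y γ ζ) (ψ j' ζ') u)) :
    ∀ᵐ u : EuclideanSpace ℝ (Fin 2), x u = y u := by
  classical
  have hψint : ∀ j ζ, Integrable (ψ j ζ) := by
    intro j ζ
    rw [show ψ j ζ = fun u => ((2:ℝ) ^ (2 * j))⁻¹ * g (((2:ℝ) ^ j)⁻¹ • u)
      * Real.sin ⟪ζ, ((2:ℝ) ^ j)⁻¹ • u⟫ from funext (hψ j ζ)]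
    exact psi_integrable hg j ζ
  have hψF : ∀ j ζ ω, fourier2 (ψ j ζ) ω
      = ((G ‖((2:ℝ) ^ j) • ω - ζ‖ - G ‖((2:ℝ) ^ j) • ω + ζ‖ : ℝ) : ℂ) / (2 * Complex.I) := by
    intro j ζ ω
    rw [show ψ j ζ = fun u => ((2:ℝ) ^ (2 * j))⁻¹ * g (((2:ℝ) ^ j)⁻¹ • u)
      * Real.sin ⟪ζ, ((2:ℝ) ^ j)⁻¹ • u⟫ from funext (hψ j ζ)]
    exact fourier2_psi hg hFg j ζ ω
  have frame_zero : ∀ ω : V2, fourier2 φ ω = 0 → fourier2 hfil ω = 0 →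
      (∀ j ∈ Finset.range J, ∀ ζ ∈ Ξ, fourier2 (ψ j ζ) ω = 0) → False := by
    intro ω h1 h2 h3
    have hf := hframe ω
    have hsum0 : (∑ j ∈ Finset.range J, ∑ ζ ∈ Ξ, ‖fourier2 (ψ j ζ) ω‖ ^ 2) = 0 :=
      Finset.sum_eq_zero fun j hj => Finset.sum_eq_zero fun ζ hζ => by
        rw [h3 j hj ζ hζ]; simp
    rw [h1, h2, hsum0] at hf
    simp at hf
  have prodEq : ∀ (a b k : V2 → ℝ), Integrable a → Integrable b → Integrable k →
      (conv2 a k =ᵐ[volume] conv2 b k) →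
      ∀ ω, fourier2 a ω * fourier2 k ω = fourier2 b ω * fourier2 k ω := by
    intro a b k ha hb hk he ω
    rw [← fourier2_conv ha hk ω, ← fourier2_conv hb hk ω, fourier2_congr he ω]
  have hvint : ∀ (z : V2 → ℝ), Integrable z → ∀ γ ζ, Integrable (v z γ ζ) := by
    intro z hz γ ζ
    rw [show v z γ ζ = fun u => ∑ j ∈ Finset.range J, max 0 (γ * conv2 z (ψ j ζ) u)
      from funext (hv z γ ζ)]
    apply integrable_finset_sum
    intro j hj
    have h1 : Integrable (fun u => γ * conv2 z (ψ j ζ) u) :=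
      (conv2_integrable hz (hψint j ζ)).const_mul γ
    have h2 : Integrable (fun u => (γ * conv2 z (ψ j ζ) u + |γ * conv2 z (ψ j ζ) u|) / 2) :=
      (h1.add h1.abs).div_const 2
    refine h2.congr ?_
    filter_upwards with u
    rcases le_total 0 (γ * conv2 z (ψ j ζ) u) with h | h
    · rw [abs_of_nonneg h, max_eq_right h]; ring
    · rw [abs_of_nonpos h, max_eq_left h]; ring
  have hveq : ∀ γ ∈ ({-1, 1} : Set ℝ), ∀ ζ ∈ Ξ, v x γ ζ =ᵐ[volume] v y γ ζ := by
    intro γ hγ ζ hζ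
    have hvx := hvint x hx γ ζ
    have hvy := hvint y hy γ ζ
    have hconvψ : ∀ ζ' ∈ Ξ, ∀ j' ∈ Finset.range J,
        conv2 (v x γ ζ) (ψ j' ζ') =ᵐ[volume] conv2 (v y γ ζ) (ψ j' ζ') := by
      intro ζ' hζ' j' hj'
      have hp := h2ψ γ hγ ζ hζ 1 (by simp) ζ' hζ' j' hj'
      have hm := h2ψ γ hγ ζ hζ (-1) (by simp) ζ' hζ' j' hj'
      filter_upwards [hp, hm] with u e1 e2
      have d1 := relu_sub (conv2 (v x γ ζ) (ψ j' ζ') u)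
      have d2 := relu_sub (conv2 (v y γ ζ) (ψ j' ζ') u)
      rw [← d1, ← d2, e1, e2]
    have hFv : ∀ ω, fourier2 (v x γ ζ) ω = fourier2 (v y γ ζ) ω := by
      intro ω
      by_contra hne
      refine frame_zero ω ?_ ?_ ?_
      · by_contra h0
        exact hne (mul_right_cancel₀ h0 (prodEq _ _ φ hvx hvy hφ (h2φ γ hγ ζ hζ) ω))
      · by_contra h0
        exact hne (mul_right_cancel₀ h0 (prodEq _ _ hfil hvx hvy hh (h2h γ hγ ζ hζ) ω))
      · intro j' hj' ζ' hζ'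
        by_contra h0
        exact hne (mul_right_cancel₀ h0
          (prodEq _ _ (ψ j' ζ') hvx hvy (hψint j' ζ') (hconvψ ζ' hζ' j' hj') ω))
    have h0 : ∀ ω, fourier2 (fun u => v x γ ζ u - v y γ ζ u) ω = 0 := fun ω => by
      rw [fourier2_sub hvx hvy, hFv, sub_self]
    have hz := fourier2_zero_ae (hvx.sub hvy) h0
    filter_upwards [hz] with u hu
    exact sub_eq_zero.1 hu
  have hsumconv : ∀ ζ ∈ Ξ,
      (fun u => ∑ j ∈ Finset.range J, conv2 x (ψ j ζ) u)
        =ᵐ[volume] (fun u => ∑ j ∈ Finset.range J, conv2 y (ψ j ζ) u) := by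
    intro ζ hζ
    filter_upwards [hveq 1 (by simp) ζ hζ, hveq (-1) (by simp) ζ hζ] with u e1 e2
    have hx' : (∑ j ∈ Finset.range J, conv2 x (ψ j ζ) u) = v x 1 ζ u - v x (-1) ζ u := by
      rw [hv, hv, ← Finset.sum_sub_distrib]
      exact (Finset.sum_congr rfl fun j _ => relu_sub _).symm
    have hy' : (∑ j ∈ Finset.range J, conv2 y (ψ j ζ) u) = v y 1 ζ u - v y (-1) ζ u := by
      rw [hv, hv, ← Finset.sum_sub_distrib]
      exact (Finset.sum_congr rfl fun j _ => relu_sub _).symm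
    simp only [hx', hy', e1, e2]
  have hsumF : ∀ ζ ∈ Ξ, ∀ ω : V2,
      (fourier2 x ω - fourier2 y ω) * (∑ j ∈ Finset.range J, fourier2 (ψ j ζ) ω) = 0 := by
    intro ζ hζ ω
    have h1 := fourier2_congr (hsumconv ζ hζ) ω
    rw [fourier2_sum (Finset.range J) _ (fun j hj => conv2_integrable hx (hψint j ζ)) ω,
      fourier2_sum (Finset.range J) _ (fun j hj => conv2_integrable hy (hψint j ζ)) ω] at h1
    simp only [fun j => fourier2_conv hx (hψint j ζ) ω,
      fun j => fourier2_conv hy (hψint j ζ) ω] at h1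
    rw [sub_mul, Finset.mul_sum, Finset.mul_sum, sub_eq_zero]
    exact h1
  have hFxy : ∀ ω : V2, fourier2 x ω = fourier2 y ω := by
    intro ω
    by_contra hne
    have hD : fourier2 x ω - fourier2 y ω ≠ 0 := sub_ne_zero.2 hne
    refine frame_zero ω ?_ ?_ ?_
    · by_contra h0
      exact hne (mul_right_cancel₀ h0 (prodEq x y φ hx hy hφ heqφ ω))
    · by_contra h0
      exact hne (mul_right_cancel₀ h0 (prodEq x y hfil hx hy hh heqh ω))
    · intro j hj ζ hζ
      have hs := hsumF ζ hζ ω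
      have hsum0 : (∑ j ∈ Finset.range J, fourier2 (ψ j ζ) ω) = 0 := by
        rcases mul_eq_zero.1 hs with h | h
        · exact absurd h hD
        · exact h
      set a : ℕ → ℝ := fun j => G ‖((2:ℝ) ^ j) • ω - ζ‖ - G ‖((2:ℝ) ^ j) • ω + ζ‖ with ha
      have hψa : ∀ i, fourier2 (ψ i ζ) ω = (a i : ℂ) / (2 * Complex.I) := fun i => hψF i ζ ω
      have hsumc : ((∑ i ∈ Finset.range J, a i : ℝ) : ℂ) / (2 * Complex.I) = 0 := by
        rw [← hsum0]
        push_cast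
        rw [Finset.sum_div]
        exact (Finset.sum_congr rfl fun i _ => (hψa i).symm)
      have hsumR : (∑ i ∈ Finset.range J, a i) = 0 := by
        rcases div_eq_zero_iff.1 hsumc with h | h
        · exact_mod_cast h
        · exact absurd h (mul_ne_zero two_ne_zero Complex.I_ne_zero)
      have hsign : (∀ i : ℕ, 0 ≤ a i) ∨ (∀ i : ℕ, a i ≤ 0) := by
        rcases le_total 0 (⟪ω, ζ⟫ : ℝ) with h | h
        · left
          intro i
          have hip : (0:ℝ) ≤ ⟪((2:ℝ) ^ i) • ω, ζ⟫ := by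
            rw [real_inner_smul_left]
            positivity
          have hnorm : ‖((2:ℝ) ^ i) • ω - ζ‖ ≤ ‖((2:ℝ) ^ i) • ω + ζ‖ :=
            norm_sub_le_norm_add' hip
          exact sub_nonneg.2 (hmono (Set.mem_Ici.2 (norm_nonneg _))
            (Set.mem_Ici.2 (norm_nonneg _)) hnorm)
        · right
          intro i
          have hip : (0:ℝ) ≤ ⟪((2:ℝ) ^ i) • ω, -ζ⟫ := by
            rw [inner_neg_right, real_inner_smul_left]
            nlinarith [pow_nonneg (by norm_num : (0:ℝ) ≤ 2) i]
          have hnorm := norm_sub_le_norm_add' hip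
          rw [sub_neg_eq_add, ← sub_eq_add_neg] at hnorm
          exact sub_nonpos.2 (hmono (Set.mem_Ici.2 (norm_nonneg _))
            (Set.mem_Ici.2 (norm_nonneg _)) hnorm)
      have haj : a j = 0 := by
        rcases hsign with h | h
        · exact (Finset.sum_eq_zero_iff_of_nonneg (fun i _ => h i)).1 hsumR j hj
        · exact (Finset.sum_eq_zero_iff_of_nonpos (fun i _ => h i)).1 hsumR j hj
      rw [hψa j, haj]
      simp
  have h0 : ∀ ω : V2, fourier2 (fun u => x u - y u) ω = 0 := fun ω => by
    rw [fourier2_sub hx hy, hFxy, sub_self]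
  have hz := fourier2_zero_ae (hx.sub hy) h0
  filter_upwards [hz] with u hu
  exact sub_eq_zero.1 hu

end Main
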